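/- Define the Stirling function S(A; n, k) = ∑_{s ∈ S_n, γ(s) = k} ∏_{i=1}^n a_{i,s(i)}. Then for n ≥ 2 and k ≥ 1, S(A; n, k) = a_{11} S(Ā_{11}; n−1, k−1) + ∑_{j=2}^n a_{1j} S(Ā_{1j}; n−1, k). -/

import Mathlib

open Matrix BigOperators

/-- Number of cycles of a permutation, counting fixed points as cycles of length 1. -/
def cycleCount {n : ℕ} (s : Equiv.Perm (Fin n)) : ℕ :=
  Multiset.card s.cycleType + (n - s.support.card)

/-- The Stirling function `S(A; n, k)`: sum of diagonal products over permutations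
with exactly `k` cycles. -/
def stirlingFn {R : Type*} [CommRing R] {m : ℕ} (A : Matrix (Fin m) (Fin m) R)
    (k : ℕ) : R :=
  ∑ s ∈ Finset.univ.filter (fun s : Equiv.Perm (Fin m) => cycleCount s = k),
    ∏ i, A i (s i)

/-- The combinatorial minor matrix `Ā_{1j}`. -/
def cminor {R : Type*} [CommRing R] {n : ℕ}
    (A : Matrix (Fin (n + 1)) (Fin (n + 1)) R) (j : Fin (n + 1)) :
    Matrix (Fin n) (Fin n) R :=
  fun i k => A i.succ (if (k : ℕ) + 1 = (j : ℕ) then 0 else k.succ)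

open Equiv Equiv.Perm Finset

section Aux

variable {α : Type*} [Fintype α] [DecidableEq α]

/-- General cycle count for a permutation of a fintype. -/
def ccount (g : Perm α) : ℕ :=
  Multiset.card g.cycleType + (Fintype.card α - g.support.card)

lemma cycleCount_eq_ccount {m : ℕ} (s : Perm (Fin m)) : cycleCount s = ccount s := by
  simp [cycleCount, ccount]

lemma swap_mul_cycle {c : Perm α} (hc : c.IsCycle) {a b : α} (hab : a ≠ b)
    (hb : b ∈ c.support) (ha : a ∉ c.support) :
    (Equiv.swap a b * c).IsCycle ∧ (Equiv.swap a b * c).support = insert a c.support := by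
  have hca : c a = a := by simpa using ha
  have hcxa : ∀ x, c x = a ↔ x = a := fun x =>
    ⟨fun h => c.injective (by rw [h, hca]), fun h => h ▸ hca⟩
  have happ : ∀ x, (Equiv.swap a b * c) x =
      if c x = b then a else if x = a then b else c x := by
    intro x
    rcases eq_or_ne (c x) b with h | h
    · simp [Perm.mul_apply, h]
    · rcases eq_or_ne x a with h2 | h2
      · rw [Perm.mul_apply, if_neg h, if_pos h2, h2, hca, Equiv.swap_apply_left]
      · have hne : c x ≠ a := fun hx => h2 ((hcxa x).mp hx)
        rw [Perm.mul_apply, if_neg h, if_neg h2, Equiv.swap_apply_of_ne_of_ne hne h]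
  have hsupp : (Equiv.swap a b * c).support = insert a c.support := by
    ext x
    simp only [Perm.mem_support, Finset.mem_insert, happ]
    rcases eq_or_ne x a with h2 | hxa
    · have h1 : c x ≠ b := by rw [h2, hca]; exact hab
      rw [if_neg h1, if_pos h2]
      simp [h2, Ne.symm hab]
    · rcases eq_or_ne (c x) b with h | h
      · have hcx : c x ≠ x := by
          intro hcc
          rw [hcc] at h
          subst h
          exact (Perm.mem_support.mp hb) hcc
        rw [if_pos h]
        simp [Ne.symm hxa, hxa, hcx]
      · rw [if_neg h, if_neg hxa]
        simp [hxa]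
  refine ⟨?_, hsupp⟩
  have hfa : (Equiv.swap a b * c) a = b := by
    rw [happ]; simp [hca, hab]
  -- same-cycle claim along powers of c starting at b
  have key : ∀ i : ℕ, (Equiv.swap a b * c).SameCycle a ((c ^ i) b) := by
    intro i
    induction i with
    | zero =>
      rw [pow_zero, Perm.one_apply]
      exact ⟨1, by simpa using hfa⟩
    | succ i ih =>
      have hmem : (c ^ i) b ∈ c.support := Perm.pow_apply_mem_support.mpr hb
      have hstep : (c ^ (i + 1)) b = c ((c ^ i) b) := by
        rw [pow_succ', Perm.mul_apply]
      rcases eq_or_ne (c ((c ^ i) b)) b with h | h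
      · rw [hstep, h]
        exact ⟨1, by simpa using hfa⟩
      · have hxa : (c ^ i) b ≠ a := fun hx => ha (hx ▸ hmem)
        have : (Equiv.swap a b * c) ((c ^ i) b) = c ((c ^ i) b) := by
          rw [happ]; simp [h, hxa]
        rw [hstep, ← this]
        exact ih.trans ⟨1, by simp⟩
  refine ⟨a, by rw [hfa]; exact hab.symm, ?_⟩
  intro y hy
  have hy' : y ∈ insert a c.support := by
    rw [← hsupp]; exact Perm.mem_support.mpr hy
  rcases Finset.mem_insert.mp hy' with rfl | hy2
  · exact Perm.SameCycle.refl _ _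
  · have hbc : c.SameCycle b y :=
      hc.sameCycle (Perm.mem_support.mp hb) (Perm.mem_support.mp hy2)
    obtain ⟨i, -, -, hi⟩ := hbc.exists_pow_eq c
    rw [← hi]
    exact key i

lemma ccount_swap_mul (g : Perm α) {a b : α} (hab : a ≠ b) (hga : g a = a) :
    ccount (Equiv.swap a b * g) + 1 = ccount g := by
  have ha : a ∉ g.support := by simp [hga]
  by_cases hb : b ∈ g.support
  · -- b moves: insert a into the cycle of b
    set c := g.cycleOf b with hc_def
    have hcmem : c ∈ g.cycleFactorsFinset := Perm.cycleOf_mem_cycleFactorsFinset_iff.mpr hb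
    have hc : c.IsCycle := (Perm.mem_cycleFactorsFinset_iff.mp hcmem).1
    have hd : (g * c⁻¹).Disjoint c := Perm.disjoint_mul_inv_of_mem_cycleFactorsFinset hcmem
    set h := g * c⁻¹ with hh_def
    have hg : g = h * c := by rw [hh_def]; group
    have hbc : b ∈ c.support := by
      rw [Perm.mem_support_cycleOf_iff]
      exact ⟨Perm.SameCycle.refl _ _, hb⟩
    have hac : a ∉ c.support := fun hx => ha (Perm.support_cycleOf_le g b hx)
    obtain ⟨hc', hsupp⟩ := swap_mul_cycle hc hab hbc hac
    have hsg : g.support = h.support ∪ c.support := by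
      rw [hg]; exact hd.support_mul
    have hah : a ∉ h.support := fun hx => ha (hsg ▸ Finset.mem_union_left _ hx)
    have hbh : b ∉ h.support :=
      fun hx => (Finset.disjoint_left.mp hd.disjoint_support hx) hbc
    have hdsw : (Equiv.swap a b).Disjoint h := by
      intro x
      rcases eq_or_ne x a with rfl | hxa
      · exact Or.inr (by simpa using hah)
      rcases eq_or_ne x b with rfl | hxb
      · exact Or.inr (by simpa using hbh)
      · exact Or.inl (Equiv.swap_apply_of_ne_of_ne hxa hxb)
    have hre : Equiv.swap a b * g = h * (Equiv.swap a b * c) := by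
      rw [hg, ← mul_assoc, hdsw.commute.eq, mul_assoc]
    have hd2 : h.Disjoint (Equiv.swap a b * c) := by
      rw [Perm.disjoint_iff_disjoint_support, hsupp, Finset.disjoint_insert_right]
      refine ⟨hah, ?_⟩
      exact Perm.disjoint_iff_disjoint_support.mp hd
    have hccard : c.support.card + 1 ≤ Fintype.card α := by
      have := Finset.card_le_univ (insert a c.support)
      rwa [Finset.card_insert_of_notMem hac] at this
    have hgcard : g.support.card = h.support.card + c.support.card := by
      rw [hg]; exact hd.card_support_mul
    have hgcard_le : h.support.card + c.support.card + 1 ≤ Fintype.card α := by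
      have h1 : (Equiv.swap a b * g).support.card ≤ Fintype.card α :=
        Finset.card_le_univ _
      rwa [hre, hd2.card_support_mul, hsupp,
        Finset.card_insert_of_notMem hac, ← add_assoc] at h1
    have htype : (Equiv.swap a b * g).cycleType = h.cycleType + (Equiv.swap a b * c).cycleType := by
      rw [hre]; exact hd2.cycleType_mul
    have htype2 : g.cycleType = h.cycleType + c.cycleType := by
      rw [hg]; exact hd.cycleType_mul
    have hcc1 : Multiset.card (Equiv.swap a b * g).cycleType =
        Multiset.card h.cycleType + 1 := by
      rw [htype, Multiset.card_add, hc'.cycleType]; simp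
    have hcc2 : Multiset.card g.cycleType = Multiset.card h.cycleType + 1 := by
      rw [htype2, Multiset.card_add, hc.cycleType]; simp
    have hcard' : (Equiv.swap a b * g).support.card =
        h.support.card + (c.support.card + 1) := by
      rw [hre, hd2.card_support_mul, hsupp, Finset.card_insert_of_notMem hac]
    unfold ccount
    rw [hcc1, hcc2, hcard', hgcard]
    omega
  · -- b is a fixed point: a and b form a new 2-cycle
    have hgb : g b = b := Perm.notMem_support.mp hb
    have hdsw : (Equiv.swap a b).Disjoint g := by
      intro x
      rcases eq_or_ne x a with rfl | hxa
      · exact Or.inr hga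
      rcases eq_or_ne x b with rfl | hxb
      · exact Or.inr hgb
      · exact Or.inl (Equiv.swap_apply_of_ne_of_ne hxa hxb)
    have htype : (Equiv.swap a b * g).cycleType = (Equiv.swap a b).cycleType + g.cycleType :=
      hdsw.cycleType_mul
    have hswt : (Equiv.swap a b).cycleType = {2} := by
      rw [(Equiv.Perm.isCycle_swap hab).cycleType, Equiv.Perm.card_support_swap hab]
    have hcard : (Equiv.swap a b * g).support.card = 2 + g.support.card := by
      rw [hdsw.card_support_mul, Equiv.Perm.card_support_swap hab]
    have hle : 2 + g.support.card ≤ Fintype.card α := by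
      rw [← hcard]; exact Finset.card_le_univ _
    unfold ccount
    rw [htype, hswt, Multiset.card_add, hcard]
    simp only [Multiset.card_singleton]
    omega

end Aux

section DecomposeFin

variable {n : ℕ}

/-- The equivalence between `Fin (n+1)` and nonzero elements of `Fin (n+2)`. -/
def succEquiv (n : ℕ) : Fin (n + 1) ≃ {x : Fin (n + 2) // x ≠ 0} where
  toFun i := ⟨i.succ, Fin.succ_ne_zero i⟩
  invFun x := (x.1).pred x.2
  left_inv i := by simp
  right_inv x := by simp

lemma decomposeFin_zero (e : Perm (Fin (n + 1))) :
    Equiv.Perm.decomposeFin.symm ((0 : Fin (n + 2)), e) = e.extendDomain (succEquiv n) := by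
  ext x
  refine Fin.cases ?_ (fun i => ?_) x
  · rw [Equiv.Perm.decomposeFin_symm_apply_zero]
    rw [Equiv.Perm.extendDomain_apply_not_subtype]
    simp
  · rw [Equiv.Perm.decomposeFin_symm_apply_succ]
    have : (i.succ : Fin (n + 2)) = ((succEquiv n i : {x : Fin (n+2) // x ≠ 0}) : Fin (n+2)) := rfl
    rw [this, Equiv.Perm.extendDomain_apply_image]
    simp [succEquiv]

lemma ccount_decomposeFin_zero (e : Perm (Fin (n + 1))) :
    ccount (Equiv.Perm.decomposeFin.symm ((0 : Fin (n + 2)), e)) = ccount e + 1 := by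
  rw [decomposeFin_zero]
  unfold ccount
  rw [Equiv.Perm.cycleType_extendDomain, Equiv.Perm.card_support_extend_domain]
  have := Finset.card_le_univ e.support
  simp only [Fintype.card_fin] at *
  omega

lemma decomposeFin_succ_eq (p : Fin (n + 2)) (e : Perm (Fin (n + 1))) :
    Equiv.Perm.decomposeFin.symm (p, e) =
      Equiv.swap 0 p * Equiv.Perm.decomposeFin.symm ((0 : Fin (n + 2)), e) := by
  ext x
  refine Fin.cases ?_ (fun i => ?_) x
  · simp [Equiv.Perm.decomposeFin_symm_apply_zero, Perm.mul_apply]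
  · simp [Equiv.Perm.decomposeFin_symm_apply_succ, Perm.mul_apply]

lemma ccount_decomposeFin_succ (j : Fin (n + 1)) (e : Perm (Fin (n + 1))) :
    ccount (Equiv.Perm.decomposeFin.symm (j.succ, e)) = ccount e := by
  have h0 : (0 : Fin (n + 2)) ≠ j.succ := (Fin.succ_ne_zero j).symm
  have hfix : (Equiv.Perm.decomposeFin.symm ((0 : Fin (n + 2)), e)) 0 = 0 := by
    rw [Equiv.Perm.decomposeFin_symm_apply_zero]
  have := ccount_swap_mul (Equiv.Perm.decomposeFin.symm ((0 : Fin (n + 2)), e)) h0 hfix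
  rw [← decomposeFin_succ_eq j.succ e] at this
  have h2 := ccount_decomposeFin_zero e
  omega

end DecomposeFin

/-- Expansion of the Stirling function over the first row:
`S(A; n, k) = a_{11} S(Ā_{11}; n-1, k-1) + ∑_{j=2}^n a_{1j} S(Ā_{1j}; n-1, k)`. -/
theorem stmt11 {R : Type*} [CommRing R] {n : ℕ} (k : ℕ) (hk : 1 ≤ k)
    (A : Matrix (Fin (n + 2)) (Fin (n + 2)) R) :
    stirlingFn A k = A 0 0 * stirlingFn (cminor A 0) (k - 1) +
      ∑ j : Fin (n + 1), A 0 j.succ * stirlingFn (cminor A j.succ) k := by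
  classical
  rw [stirlingFn, Finset.sum_filter,
    ← Equiv.sum_comp (Equiv.Perm.decomposeFin.symm)
      (fun s : Perm (Fin (n + 2)) => if cycleCount s = k then ∏ i, A i (s i) else 0),
    Fintype.sum_prod_type, Fin.sum_univ_succ]
  congr 1
  · -- p = 0 term
    rw [stirlingFn, Finset.sum_filter, Finset.mul_sum]
    apply Finset.sum_congr rfl
    intro e _
    have h1 : cycleCount (Equiv.Perm.decomposeFin.symm ((0 : Fin (n + 2)), e))
        = cycleCount e + 1 := by
      rw [cycleCount_eq_ccount, cycleCount_eq_ccount, ccount_decomposeFin_zero]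
    have h2 : ∏ i, A i ((Equiv.Perm.decomposeFin.symm ((0 : Fin (n + 2)), e)) i)
        = A 0 0 * ∏ x, cminor A 0 x (e x) := by
      have hx : ∀ x : Fin (n + 1),
          A x.succ ((Equiv.Perm.decomposeFin.symm ((0 : Fin (n + 2)), e)) x.succ)
            = cminor A 0 x (e x) := by
        intro x
        rw [Equiv.Perm.decomposeFin_symm_apply_succ]
        simp [cminor]
      rw [Fin.prod_univ_succ, Equiv.Perm.decomposeFin_symm_apply_zero,
        Finset.prod_congr rfl (fun x _ => hx x)]
    rw [h1, h2]
    have hiff : (cycleCount e + 1 = k) ↔ (cycleCount e = k - 1) := by omega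
    rw [if_congr hiff rfl rfl]
    split_ifs <;> ring
  · -- p = j.succ terms
    apply Finset.sum_congr rfl
    intro j _
    rw [stirlingFn, Finset.sum_filter, Finset.mul_sum]
    apply Finset.sum_congr rfl
    intro e _
    have h1 : cycleCount (Equiv.Perm.decomposeFin.symm (j.succ, e)) = cycleCount e := by
      rw [cycleCount_eq_ccount, cycleCount_eq_ccount, ccount_decomposeFin_succ]
    have h2 : ∏ i, A i ((Equiv.Perm.decomposeFin.symm (j.succ, e)) i)
        = A 0 j.succ * ∏ x, cminor A j.succ x (e x) := by
      have hx : ∀ x : Fin (n + 1),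
          A x.succ ((Equiv.Perm.decomposeFin.symm (j.succ, e)) x.succ)
            = cminor A j.succ x (e x) := by
        intro x
        rw [Equiv.Perm.decomposeFin_symm_apply_succ]
        rcases eq_or_ne (e x) j with h | h
        · subst h
          rw [Equiv.swap_apply_right]
          simp [cminor]
        · have hne : ((e x).succ : Fin (n + 2)) ≠ j.succ := by
            simpa using fun hc => h (Fin.succ_injective _ hc)
          rw [Equiv.swap_apply_of_ne_of_ne (Fin.succ_ne_zero _) hne]
          have hvv : ¬((e x : ℕ) = (j : ℕ)) := fun hcc => h (Fin.val_injective hcc)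
          simp [cminor, hvv]
      rw [Fin.prod_univ_succ, Equiv.Perm.decomposeFin_symm_apply_zero,
        Finset.prod_congr rfl (fun x _ => hx x)]
    rw [h1, h2]
    split_ifs <;> ring
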